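/- Under the deformation setup below, the operators T_n satisfy: (a) T_n(π(f)) = 0 for every f ∈ A and every n ≥ 1 (so T fixes pure prolongations: T(π(f),0,0,…) = (π(f),0,0,…)); (b) T_n(J) = 0 for every n ≥ 1 (so T(Ĵ) = Ĵ); and (c) for every formal series f : ℕ → A, the extended map T satisfies (T(f ∗ Ĵ))_n = f_n · J for every n ∈ ℕ. -/

import Mathlib

/-- The operators `T_n` of the star product reduction: `T_0 = id` and
`T_n(f) = -∑_{k=1}^{n} T_{n-k}(M_k(p_J(f), J))` for `n ≥ 1`. -/
noncomputable def Tred {A : Type*} [CommRing A] (J : A) (pJ : A → A)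
    (M : ℕ → A → A → A) : ℕ → A → A
  | 0, f => f
  | (n+1), f =>
      -∑ k ∈ (Finset.range (n+1)).attach,
        Tred J pJ M k.1 (M (n+1-k.1) (pJ f) J)
  termination_by n _ => n
  decreasing_by
    have := k.2
    simp only [Finset.mem_range] at this
    omega

section Aux

variable {R A : Type*} [CommRing R] [CommRing A] [Algebra R A]
  (J : A) (pJ : A →ₗ[R] A) (M : ℕ → A →ₗ[R] A →ₗ[R] A)

lemma Tred_zeroth {A : Type*} [CommRing A] (J : A) (pJ : A → A)
    (M : ℕ → A → A → A) (f : A) : Tred J pJ M 0 f = f := by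
  rw [Tred]

lemma Tred_succ (n : ℕ) (f : A) :
    Tred J (pJ ·) (fun k a b => M k a b) (n+1) f
      = -∑ k ∈ Finset.range (n+1),
          Tred J (pJ ·) (fun k a b => M k a b) k (M (n+1-k) (pJ f) J) := by
  rw [Tred]
  congr 1
  exact Finset.sum_attach (Finset.range (n+1))
    (fun k => Tred J (pJ ·) (fun k a b => M k a b) k (M (n+1-k) (pJ f) J))

lemma Tred_zero : ∀ n, Tred J (pJ ·) (fun k a b => M k a b) n 0 = 0 := by
  intro n
  induction n using Nat.strong_induction_on with
  | _ n ih =>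
    match n with
    | 0 => exact Tred_zeroth _ _ _ _
    | n+1 =>
      rw [Tred_succ]
      have h : ∀ k ∈ Finset.range (n+1),
          Tred J (pJ ·) (fun k a b => M k a b) k (M (n+1-k) (pJ 0) J) = 0 := by
        intro k hk
        rw [map_zero pJ, map_zero (M (n+1-k)), LinearMap.zero_apply]
        exact ih k (Finset.mem_range.mp hk)
      rw [Finset.sum_congr rfl h, Finset.sum_const_zero, neg_zero]

lemma Tred_add : ∀ n, ∀ x y : A,
    Tred J (pJ ·) (fun k a b => M k a b) n (x + y)
      = Tred J (pJ ·) (fun k a b => M k a b) n x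
        + Tred J (pJ ·) (fun k a b => M k a b) n y := by
  intro n
  induction n using Nat.strong_induction_on with
  | _ n ih =>
    match n with
    | 0 => intro x y; rw [Tred_zeroth, Tred_zeroth, Tred_zeroth]
    | n+1 =>
      intro x y
      rw [Tred_succ, Tred_succ, Tred_succ]
      have h : ∀ k ∈ Finset.range (n+1),
          Tred J (pJ ·) (fun k a b => M k a b) k (M (n+1-k) (pJ (x+y)) J)
            = Tred J (pJ ·) (fun k a b => M k a b) k (M (n+1-k) (pJ x) J)
              + Tred J (pJ ·) (fun k a b => M k a b) k (M (n+1-k) (pJ y) J) := by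
        intro k hk
        rw [map_add pJ, map_add (M (n+1-k)), LinearMap.add_apply]
        exact ih k (Finset.mem_range.mp hk) _ _
      rw [Finset.sum_congr rfl h, Finset.sum_add_distrib, neg_add]

lemma Tred_sum {ι : Type*} (n : ℕ) (s : Finset ι) (h : ι → A) :
    Tred J (pJ ·) (fun k a b => M k a b) n (∑ i ∈ s, h i)
      = ∑ i ∈ s, Tred J (pJ ·) (fun k a b => M k a b) n (h i) :=
  map_sum (AddMonoidHom.mk' (Tred J (pJ ·) (fun k a b => M k a b) n)
    (Tred_add J pJ M n)) h s

lemma triangle {B : Type*} [AddCommMonoid B] (G : ℕ → ℕ → B) :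
    ∀ n, ∑ m ∈ Finset.range (n+1), ∑ k ∈ Finset.range (n-m), G m k
      = ∑ s ∈ Finset.range n, ∑ j ∈ Finset.range (s+1), G j (s-j) := by
  intro n
  induction n with
  | zero => simp
  | succ n ih =>
    rw [Finset.sum_range_succ (fun s => ∑ j ∈ Finset.range (s+1), G j (s-j)) n, ← ih]
    rw [Finset.sum_range_succ
      (fun m => ∑ k ∈ Finset.range (n+1-m), G m k) (n+1)]
    simp only [Nat.sub_self, Finset.range_zero, Finset.sum_empty, add_zero]
    rw [← Finset.sum_add_distrib]
    refine Finset.sum_congr rfl fun m hm => ?_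
    have hm' : m ≤ n := Nat.lt_succ_iff.mp (Finset.mem_range.mp hm)
    have h1 : n + 1 - m = (n - m) + 1 := by omega
    rw [h1, Finset.sum_range_succ]

end Aux

/-- The star product of two formal series: `(f ∗ g)_n = ∑_{k+i+j=n} M_k(f_i, g_j)`. -/
noncomputable def starSeq {A : Type*} [CommRing A] (M : ℕ → A → A → A)
    (f g : ℕ → A) : ℕ → A :=
  fun n => ∑ p ∈ Finset.HasAntidiagonal.antidiagonal n, ∑ q ∈ Finset.HasAntidiagonal.antidiagonal p.2,
    M p.1 (f q.1) (g q.2)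

/-- The constraint function `J` viewed as a formal series `Ĵ = (J, 0, 0, …)`. -/
def Jhat {A : Type*} [CommRing A] (J : A) : ℕ → A :=
  fun n => if n = 0 then J else 0

/-- The extension of `T` to formal series: `(T f)_n = ∑_{m=0}^{n} T_m(f_{n-m})`. -/
noncomputable def Text {A : Type*} [CommRing A] (J : A) (pJ : A → A)
    (M : ℕ → A → A → A) (f : ℕ → A) : ℕ → A :=
  fun n => ∑ m ∈ Finset.range (n+1), Tred J pJ M m (f (n-m))

theorem T_fixes_prolongations_and_maps_star_mult_to_mult
    {R A : Type*} [CommRing R] [CommRing A] [Algebra R A]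
    (J : A) (hJreg : ∀ a : A, a * J = 0 → a = 0)
    (π pJ : A →ₗ[R] A)
    (hπidem : ∀ a : A, π (π a) = π a)
    (hπJ : ∀ a : A, π (a * J) = 0)
    (hdecomp : ∀ f : A, f = π f + pJ f * J)
    (M : ℕ → A →ₗ[R] A →ₗ[R] A)
    (hM0 : ∀ f g : A, M 0 f g = f * g)
    (hMone : ∀ k, 1 ≤ k → ∀ f : A, M k 1 f = 0 ∧ M k f 1 = 0) :
    (∀ f : A, ∀ n, 1 ≤ n →
        Tred J (pJ ·) (fun k a b => M k a b) n (π f) = 0) ∧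
    (∀ n, 1 ≤ n → Tred J (pJ ·) (fun k a b => M k a b) n J = 0) ∧
    (∀ f : ℕ → A, ∀ n : ℕ,
        Text J (pJ ·) (fun k a b => M k a b)
          (starSeq (fun k a b => M k a b) f (Jhat J)) n = f n * J) := by
  -- basic facts about pJ
  have hpJ_mul : ∀ a : A, pJ (a * J) = a := by
    intro a
    have h := hdecomp (a * J)
    rw [hπJ a, zero_add] at h
    have h2 : (pJ (a * J) - a) * J = 0 := by rw [sub_mul, ← h, sub_self]
    exact sub_eq_zero.mp (hJreg _ h2)
  have hpJ_pi : ∀ f : A, pJ (π f) = 0 := by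
    intro f
    have h := hdecomp (π f)
    rw [hπidem f, left_eq_add] at h
    exact hJreg _ h
  have hpJ_J : pJ J = 1 := by
    have hπ1 : π J = 0 := by have := hπJ 1; rwa [one_mul] at this
    have h := hdecomp J
    rw [hπ1, zero_add] at h
    have h2 : (pJ J - 1) * J = 0 := by rw [sub_mul, one_mul, ← h, sub_self]
    exact sub_eq_zero.mp (hJreg _ h2)
  refine ⟨?_, ?_, ?_⟩
  · -- (a)
    intro f n hn
    obtain ⟨m, rfl⟩ : ∃ m, n = m + 1 := ⟨n - 1, by omega⟩
    rw [Tred_succ]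
    have h : ∀ k ∈ Finset.range (m+1),
        Tred J (pJ ·) (fun k a b => M k a b) k (M (m+1-k) (pJ (π f)) J) = 0 := by
      intro k hk
      rw [hpJ_pi f, map_zero (M (m+1-k)), LinearMap.zero_apply]
      exact Tred_zero J pJ M k
    rw [Finset.sum_congr rfl h, Finset.sum_const_zero, neg_zero]
  · -- (b)
    intro n hn
    obtain ⟨m, rfl⟩ : ∃ m, n = m + 1 := ⟨n - 1, by omega⟩
    rw [Tred_succ]
    have h : ∀ k ∈ Finset.range (m+1),
        Tred J (pJ ·) (fun k a b => M k a b) k (M (m+1-k) (pJ J) J) = 0 := by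
      intro k hk
      have hk' : 1 ≤ m + 1 - k := by
        have := Finset.mem_range.mp hk; omega
      rw [hpJ_J, (hMone _ hk' J).1]
      exact Tred_zero J pJ M k
    rw [Finset.sum_congr rfl h, Finset.sum_const_zero, neg_zero]
  · -- (c)
    intro f n
    -- Step 1: identify the star product with Ĵ
    have hstar : ∀ j : ℕ,
        starSeq (fun k a b => M k a b) f (Jhat J) j
          = ∑ k ∈ Finset.range (j+1), M k (f (j-k)) J := by
      intro j
      unfold starSeq
      have hinner : ∀ p ∈ Finset.HasAntidiagonal.antidiagonal j,
          (∑ q ∈ Finset.HasAntidiagonal.antidiagonal p.2, M p.1 (f q.1) (Jhat J q.2))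
            = M p.1 (f p.2) J := by
        intro p _
        rw [Finset.sum_eq_single (p.2, 0)]
        · simp [Jhat]
        · intro q hq hne
          have hq' := Finset.HasAntidiagonal.mem_antidiagonal.mp hq
          have : q.2 ≠ 0 := by
            intro h0
            apply hne
            have : q.1 = p.2 := by omega
            exact Prod.ext this h0
          simp [Jhat, this]
        · intro hnot
          exact absurd (Finset.HasAntidiagonal.mem_antidiagonal.mpr (by simp)) hnot
      rw [Finset.sum_congr rfl hinner]
      exact Finset.Nat.sum_antidiagonal_eq_sum_range_succ (fun a b => M a (f b) J) j
    unfold Text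
    simp only [hstar]
    -- Step 2: distribute T over the inner sums
    have hdist : ∀ m ∈ Finset.range (n+1),
        Tred J (pJ ·) (fun k a b => M k a b) m
            (∑ k ∈ Finset.range (n-m+1), M k (f (n-m-k)) J)
          = ∑ k ∈ Finset.range (n-m+1),
              Tred J (pJ ·) (fun k a b => M k a b) m (M k (f (n-m-k)) J) := by
      intro m _
      exact Tred_sum J pJ M m _ _
    rw [Finset.sum_congr rfl hdist]
    -- Step 3: split off the k = 0 term of each inner sum
    have hsplit : ∀ m ∈ Finset.range (n+1),
        (∑ k ∈ Finset.range (n-m+1),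
            Tred J (pJ ·) (fun k a b => M k a b) m (M k (f (n-m-k)) J))
          = (∑ k ∈ Finset.range (n-m),
              Tred J (pJ ·) (fun k a b => M k a b) m (M (k+1) (f (n-m-(k+1))) J))
            + Tred J (pJ ·) (fun k a b => M k a b) m (f (n-m) * J) := by
      intro m _
      rw [Finset.sum_range_succ'
        (fun k => Tred J (pJ ·) (fun k a b => M k a b) m (M k (f (n-m-k)) J)) (n-m)]
      congr 1
      rw [Nat.sub_zero, hM0]
    rw [Finset.sum_congr rfl hsplit, Finset.sum_add_distrib]
    -- Step 4: reindex the double sum B with the triangle lemma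
    rw [triangle (fun m k =>
      Tred J (pJ ·) (fun k a b => M k a b) m (M (k+1) (f (n-m-(k+1))) J)) n]
    -- Step 5: split off the m = 0 term of A and expand T_{m+1}
    rw [Finset.sum_range_succ'
      (fun m => Tred J (pJ ·) (fun k a b => M k a b) m (f (n-m) * J)) n]
    have hA : ∀ m ∈ Finset.range n,
        Tred J (pJ ·) (fun k a b => M k a b) (m+1) (f (n-(m+1)) * J)
          = -∑ j ∈ Finset.range (m+1),
              Tred J (pJ ·) (fun k a b => M k a b) j (M (m+1-j) (f (n-(m+1))) J) := by
      intro m _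
      rw [Tred_succ]
      congr 1
      refine Finset.sum_congr rfl fun j hj => ?_
      rw [hpJ_mul]
    rw [Finset.sum_congr rfl hA]
    have hT0 : Tred J (pJ ·) (fun k a b => M k a b) 0 (f (n-0) * J) = f n * J := by
      rw [Nat.sub_zero, Tred_zeroth]
    rw [hT0]
    -- Step 6: the two double sums cancel
    have hmatch : ∀ s ∈ Finset.range n,
        (∑ j ∈ Finset.range (s+1),
            Tred J (pJ ·) (fun k a b => M k a b) j (M (s-j+1) (f (n-j-(s-j+1))) J))
          = ∑ j ∈ Finset.range (s+1),
              Tred J (pJ ·) (fun k a b => M k a b) j (M (s+1-j) (f (n-(s+1))) J) := by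
      intro s hs
      have hs' := Finset.mem_range.mp hs
      refine Finset.sum_congr rfl fun j hj => ?_
      have hj' := Finset.mem_range.mp hj
      have e1 : s - j + 1 = s + 1 - j := by omega
      have e2 : n - j - (s - j + 1) = n - (s+1) := by omega
      rw [e2, e1]
    rw [Finset.sum_congr rfl hmatch]
    simp only [Finset.sum_neg_distrib]
    abel
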